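/- Let Φ0 ∈ ℝ^{n+1} and Φ1 ∈ ℝ^{m+1} be antisymmetric phase lists, and let P0 and P1 be the real polynomials such that both diagonal entries of U_{Φ0}(x) equal P0(x) and both diagonal entries of U_{Φ1}(x) equal P1(x) for all x ∈ [-1,1]. Then for every x ∈ [-1,1], both diagonal entries of the nested QSP unitary (Φ1 ∘ Φ0)(x) are equal to the composition P1(P0(x)); in particular, nesting of antisymmetric QSP protocols composes their embedded polynomial transforms. -/

import Mathlib

open Matrix Polynomial

/-- The single-qubit Z-rotation `Z(φ) = diag(e^{iφ}, e^{-iφ})`. -/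
noncomputable def Zrot (φ : ℝ) : Matrix (Fin 2) (Fin 2) ℂ :=
  !![Complex.exp (Complex.I * (φ : ℂ)), 0; 0, Complex.exp (-(Complex.I * (φ : ℂ)))]

/-- The QSP signal oracle `W(x)`, with diagonal entries `x` and off-diagonal
entries `i·√(1-x²)`. -/
noncomputable def Wosc (x : ℝ) : Matrix (Fin 2) (Fin 2) ℂ :=
  !![(x : ℂ), Complex.I * (Real.sqrt (1 - x ^ 2) : ℂ);
     Complex.I * (Real.sqrt (1 - x ^ 2) : ℂ), (x : ℂ)]

/-- The QSP unitary `U_Φ(x) = Z(φ₀)·W(x)·Z(φ₁)·W(x)·Z(φ₂)⋯W(x)·Z(φ_d)`. -/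
noncomputable def qspU {d : ℕ} (Φ : Fin (d + 1) → ℝ) (x : ℝ) :
    Matrix (Fin 2) (Fin 2) ℂ :=
  Zrot (Φ 0) * (List.ofFn fun k : Fin d => Wosc x * Zrot (Φ k.succ)).prod

/-- The nested QSP unitary `(Φ1 ∘ Φ0)(x)`: the QSP circuit of `Φ1` with each
oracle `W(x)` replaced by `U_{Φ0}(x)`. -/
noncomputable def nestedU {n m : ℕ} (Φ1 : Fin (m + 1) → ℝ) (Φ0 : Fin (n + 1) → ℝ)
    (x : ℝ) : Matrix (Fin 2) (Fin 2) ℂ :=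
  Zrot (Φ1 0) * (List.ofFn fun k : Fin m => qspU Φ0 x * Zrot (Φ1 k.succ)).prod

/-- A phase list `Φ = (φ_0, …, φ_d)` is antisymmetric if `φ_k = -φ_{d-k}` for all `k`. -/
def Antisym {d : ℕ} (Φ : Fin (d + 1) → ℝ) : Prop := ∀ k, Φ (Fin.rev k) = -Φ k

/-- A polynomial has parity `m mod 2` if only monomials of degree congruent to `m`
modulo 2 have nonzero coefficients. -/
def HasParity {R : Type*} [Semiring R] (m : ℕ) (P : Polynomial R) : Prop :=
  ∀ k, k % 2 ≠ m % 2 → P.coeff k = 0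

lemma Zrot_mul (a b : ℝ) : Zrot a * Zrot b = Zrot (a + b) := by
  ext i j
  fin_cases i <;> fin_cases j <;>
    simp [Zrot, Matrix.mul_apply, Fin.sum_univ_two, ← Complex.exp_add] <;>
    congr 1 <;> push_cast <;> ring

lemma Zrot_zero : Zrot 0 = 1 := by
  simp [Zrot, Matrix.one_fin_two]

lemma Zrot_mem (φ : ℝ) : Zrot φ ∈ Matrix.unitaryGroup (Fin 2) ℂ := by
  rw [Matrix.mem_unitaryGroup_iff]
  ext i j
  fin_cases i <;> fin_cases j <;>
    simp [Zrot, Matrix.mul_apply, Fin.sum_univ_two, Matrix.star_apply, ← Complex.exp_conj,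
      ← Complex.exp_add, Matrix.one_apply]

lemma Wosc_mem {x : ℝ} (hx : x ∈ Set.Icc (-1:ℝ) 1) :
    Wosc x ∈ Matrix.unitaryGroup (Fin 2) ℂ := by
  have h1 : (0:ℝ) ≤ 1 - x ^ 2 := by nlinarith [hx.1, hx.2]
  have hs : (Real.sqrt (1 - x ^ 2)) ^ 2 = 1 - x ^ 2 := Real.sq_sqrt h1
  rw [Matrix.mem_unitaryGroup_iff]
  ext i j
  fin_cases i <;> fin_cases j <;>
    · simp [Wosc, Matrix.mul_apply, Fin.sum_univ_two, Matrix.star_apply, Matrix.one_apply,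
        Complex.ext_iff]
      nlinarith [hs]

lemma Zrot_det (φ : ℝ) : (Zrot φ).det = 1 := by
  simp [Zrot, Matrix.det_fin_two_of, ← Complex.exp_add]

lemma Wosc_det {x : ℝ} (hx : x ∈ Set.Icc (-1:ℝ) 1) : (Wosc x).det = 1 := by
  have h1 : (0:ℝ) ≤ 1 - x ^ 2 := by nlinarith [hx.1, hx.2]
  have hs : (Real.sqrt (1 - x ^ 2)) ^ 2 = 1 - x ^ 2 := Real.sq_sqrt h1
  simp [Wosc, Matrix.det_fin_two_of, Complex.ext_iff]
  nlinarith [hs]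

lemma qspU_mem {d : ℕ} (Φ : Fin (d + 1) → ℝ) {x : ℝ} (hx : x ∈ Set.Icc (-1:ℝ) 1) :
    qspU Φ x ∈ Matrix.unitaryGroup (Fin 2) ℂ := by
  refine Submonoid.mul_mem _ (Zrot_mem _) (Submonoid.list_prod_mem _ ?_)
  intro M hM
  rw [List.mem_ofFn] at hM
  obtain ⟨k, rfl⟩ := hM
  exact Submonoid.mul_mem _ (Wosc_mem hx) (Zrot_mem _)

lemma qspU_det {d : ℕ} (Φ : Fin (d + 1) → ℝ) {x : ℝ} (hx : x ∈ Set.Icc (-1:ℝ) 1) :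
    (qspU Φ x).det = 1 := by
  rw [qspU, Matrix.det_mul, Zrot_det, one_mul]
  rw [show ∀ l : List (Matrix (Fin 2) (Fin 2) ℂ), l.prod.det = (l.map Matrix.det).prod
    from fun l => map_list_prod Matrix.detMonoidHom l]
  refine List.prod_eq_one ?_
  intro a ha
  rw [List.mem_map] at ha
  obtain ⟨M, hM, rfl⟩ := ha
  rw [List.mem_ofFn] at hM
  obtain ⟨k, rfl⟩ := hM
  simp [Matrix.det_mul, Zrot_det, Wosc_det hx]

lemma conj_prod (α p : ℝ) (L : List ℝ) :
    (L.map fun ψ => (Zrot α * Wosc p * Zrot (-α)) * Zrot ψ).prod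
      = Zrot α * (L.map fun ψ => Wosc p * Zrot ψ).prod * Zrot (-α) := by
  induction L with
  | nil => simp [Zrot_mul, Zrot_zero]
  | cons ψ L ih =>
      have h : ∀ X : Matrix (Fin 2) (Fin 2) ℂ,
          Zrot (-α) * (Zrot ψ * (Zrot α * X)) = Zrot ψ * X := by
        intro X
        rw [← mul_assoc, ← mul_assoc, Zrot_mul, Zrot_mul,
          show -α + ψ + α = ψ by ring]
      rw [List.map_cons, List.prod_cons, List.map_cons, List.prod_cons, ih]
      simp only [mul_assoc]
      rw [h]

lemma conj_W (α p : ℝ) : Zrot α * Wosc p * Zrot (-α) =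
    !![(p:ℂ), Complex.I * (Real.sqrt (1-p^2) : ℂ) * Complex.exp (Complex.I * (2*α));
       Complex.I * (Real.sqrt (1-p^2) : ℂ) * Complex.exp (-(Complex.I * (2*α))), (p:ℂ)] := by
  ext i j
  fin_cases i <;> fin_cases j
  · simp [Zrot, Wosc, Matrix.mul_apply, Fin.sum_univ_two]
    rw [mul_comm, ← mul_assoc, ← Complex.exp_add,
      show -(Complex.I*(α:ℂ)) + Complex.I*(α:ℂ) = 0 by ring, Complex.exp_zero, one_mul]
  · simp [Zrot, Wosc, Matrix.mul_apply, Fin.sum_univ_two]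
    rw [mul_comm, ← mul_assoc, ← Complex.exp_add,
      show Complex.I*(α:ℂ) + Complex.I*(α:ℂ) = Complex.I*(2*(α:ℂ)) by ring]
    ring
  · simp [Zrot, Wosc, Matrix.mul_apply, Fin.sum_univ_two]
    rw [mul_comm, ← mul_assoc, ← Complex.exp_add,
      show -(Complex.I*(α:ℂ)) + -(Complex.I*(α:ℂ)) = -(Complex.I*(2*(α:ℂ))) by ring]
    ring
  · simp [Zrot, Wosc, Matrix.mul_apply, Fin.sum_univ_two]
    rw [mul_comm, ← mul_assoc, ← Complex.exp_add,
      show Complex.I*(α:ℂ) + -(Complex.I*(α:ℂ)) = 0 by ring, Complex.exp_zero, one_mul]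

lemma conj_diag (α : ℝ) (M : Matrix (Fin 2) (Fin 2) ℂ) :
    (Zrot α * M * Zrot (-α)) 0 0 = M 0 0 ∧ (Zrot α * M * Zrot (-α)) 1 1 = M 1 1 := by
  constructor
  · simp [Zrot, Matrix.mul_apply, Matrix.vecMul, dotProduct, Fin.sum_univ_two]
    rw [mul_comm, ← mul_assoc, ← Complex.exp_add,
      show -(Complex.I*(α:ℂ)) + Complex.I*(α:ℂ) = 0 by ring, Complex.exp_zero, one_mul]
  · simp [Zrot, Matrix.mul_apply, Matrix.vecMul, dotProduct, Fin.sum_univ_two]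
    rw [mul_comm, ← mul_assoc, ← Complex.exp_add,
      show Complex.I*(α:ℂ) + -(Complex.I*(α:ℂ)) = 0 by ring, Complex.exp_zero, one_mul]

lemma exists_conj {d : ℕ} (Φ : Fin (d + 1) → ℝ) {x p : ℝ} (hx : x ∈ Set.Icc (-1:ℝ) 1)
    (h00 : qspU Φ x 0 0 = (p : ℂ)) (h11 : qspU Φ x 1 1 = (p : ℂ)) :
    p ∈ Set.Icc (-1:ℝ) 1 ∧ ∃ α, qspU Φ x = Zrot α * Wosc p * Zrot (-α) := by
  set U := qspU Φ x with hUdef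
  have hmem := qspU_mem Φ hx
  have hU1 : U * star U = 1 := Matrix.mem_unitaryGroup_iff.1 hmem
  have hU2 : star U * U = 1 := Matrix.mem_unitaryGroup_iff'.1 hmem
  set b := U 0 1 with hbdef
  set c := U 1 0 with hcdef
  have e1 : (U * star U) 0 0 = (1 : Matrix (Fin 2) (Fin 2) ℂ) 0 0 := by rw [hU1]
  have e2 : (star U * U) 0 0 = (1 : Matrix (Fin 2) (Fin 2) ℂ) 0 0 := by rw [hU2]
  simp only [Matrix.mul_apply, Fin.sum_univ_two, Matrix.star_apply, Matrix.one_apply_eq,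
    ← hbdef, ← hcdef, h00] at e1 e2
  rw [show star c * c = c * star c from mul_comm _ _] at e2
  simp only [Complex.star_def, Complex.mul_conj, Complex.conj_ofReal] at e1 e2
  rw [show (p:ℂ) * (p:ℂ) = ((p^2 : ℝ):ℂ) by push_cast; ring] at e1 e2
  have hb2 : p ^ 2 + Complex.normSq b = 1 := by exact_mod_cast e1
  have hc2 : p ^ 2 + Complex.normSq c = 1 := by exact_mod_cast e2
  have hdet : U.det = 1 := qspU_det Φ hx
  rw [Matrix.det_fin_two, h00, h11, ← hbdef, ← hcdef] at hdet
  have hpIcc : p ∈ Set.Icc (-1:ℝ) 1 := by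
    constructor <;> nlinarith [Complex.normSq_nonneg b]
  refine ⟨hpIcc, ?_⟩
  have h1p : (0:ℝ) ≤ 1 - p ^ 2 := by nlinarith [Complex.normSq_nonneg b]
  set s : ℝ := Real.sqrt (1 - p ^ 2) with hsdef
  have hs2 : s ^ 2 = 1 - p ^ 2 := Real.sq_sqrt h1p
  have hsnn : 0 ≤ s := Real.sqrt_nonneg _
  have hbc : b * c = -((s:ℂ))^2 := by
    have : (p:ℂ) * (p:ℂ) - b * c = 1 := hdet
    have hcast : ((s:ℂ))^2 = 1 - (p:ℂ)^2 := by exact_mod_cast congrArg (Complex.ofReal) hs2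
    rw [hcast]; linear_combination -this
  by_cases hb0 : b = 0
  · have hs0 : (1:ℝ) - p ^ 2 = 0 := by
      rw [hb0] at hb2; simp at hb2
      rcases hb2 with h | h <;> rw [h] <;> ring
    have hc0 : c = 0 := by
      have : Complex.normSq c = 0 := by linarith
      exact Complex.normSq_eq_zero.1 this
    refine ⟨0, ?_⟩
    rw [neg_zero, Zrot_zero, one_mul, mul_one, Matrix.eta_fin_two U, ← hbdef, ← hcdef,
      h00, h11, hb0, hc0, Wosc]
    rw [show Real.sqrt (1 - p ^ 2) = 0 by rw [hs0, Real.sqrt_zero]]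
    norm_num
  · have hnsb : Complex.normSq b = s ^ 2 := by rw [hs2]; linarith
    have habs : ‖b‖ = s := by
      rw [Complex.norm_def, hnsb, Real.sqrt_sq hsnn]
    have hspos : 0 < s := by
      rcases lt_or_eq_of_le hsnn with h | h
      · exact h
      · exfalso; exact hb0 (norm_eq_zero.1 (by rw [habs, ← h]))
    set u : ℂ := b / (Complex.I * (s:ℂ)) with hudef
    have hIs : (Complex.I * (s:ℂ)) ≠ 0 := by
      simp [Complex.I_ne_zero, Complex.ofReal_ne_zero, ne_of_gt hspos]
    have habsu : ‖u‖ = 1 := by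
      rw [hudef, norm_div, norm_mul, Complex.norm_I, habs, Complex.norm_real, Real.norm_eq_abs,
        abs_of_pos hspos, one_mul, div_self (ne_of_gt hspos)]
    set θ : ℝ := u.arg with hθdef
    have hexp : Complex.exp ((θ:ℂ) * Complex.I) = u := by
      have := Complex.norm_mul_exp_arg_mul_I u
      rwa [habsu, Complex.ofReal_one, one_mul] at this
    have hb : b = Complex.I * (s:ℂ) * Complex.exp (Complex.I * (θ:ℂ)) := by
      rw [mul_comm Complex.I (θ:ℂ), hexp, hudef, mul_div_cancel₀ _ hIs]
    have hc : c = Complex.I * (s:ℂ) * Complex.exp (-(Complex.I * (θ:ℂ))) := by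
      apply mul_left_cancel₀ hb0
      rw [hbc]
      nth_rewrite 1 [hb]
      rw [show Complex.I * (s:ℂ) * Complex.exp (Complex.I * (θ:ℂ)) *
          (Complex.I * (s:ℂ) * Complex.exp (-(Complex.I * (θ:ℂ))))
        = (Complex.I * Complex.I) * ((s:ℂ) * (s:ℂ)) *
          (Complex.exp (Complex.I * (θ:ℂ)) * Complex.exp (-(Complex.I * (θ:ℂ)))) by ring,
        ← Complex.exp_add, Complex.I_mul_I,
        show Complex.I * (θ:ℂ) + -(Complex.I * (θ:ℂ)) = 0 by ring, Complex.exp_zero]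
      ring
    refine ⟨θ / 2, ?_⟩
    rw [conj_W, Matrix.eta_fin_two U, ← hbdef, ← hcdef, h00, h11, hb, hc, ← hsdef]
    rw [show ((2:ℂ) * ((θ/2 : ℝ):ℂ)) = (θ:ℂ) by push_cast; ring]

/-- Nesting of antisymmetric QSP protocols composes their
embedded (real) polynomial transforms. -/
theorem antisym_qsp_nesting_composes (n m : ℕ)
    (Φ0 : Fin (n + 1) → ℝ) (Φ1 : Fin (m + 1) → ℝ)
    (h0 : Antisym Φ0) (h1 : Antisym Φ1) (P0 P1 : Polynomial ℝ)
    (hP0 : ∀ x ∈ Set.Icc (-1 : ℝ) 1,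
      (qspU Φ0 x) 0 0 = ((P0.eval x : ℝ) : ℂ) ∧
      (qspU Φ0 x) 1 1 = ((P0.eval x : ℝ) : ℂ))
    (hP1 : ∀ x ∈ Set.Icc (-1 : ℝ) 1,
      (qspU Φ1 x) 0 0 = ((P1.eval x : ℝ) : ℂ) ∧
      (qspU Φ1 x) 1 1 = ((P1.eval x : ℝ) : ℂ)) :
    ∀ x ∈ Set.Icc (-1 : ℝ) 1,
      (nestedU Φ1 Φ0 x) 0 0 = ((P1.eval (P0.eval x) : ℝ) : ℂ) ∧
      (nestedU Φ1 Φ0 x) 1 1 = ((P1.eval (P0.eval x) : ℝ) : ℂ) := by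
  intro x hx
  obtain ⟨h00, h11⟩ := hP0 x hx
  set p : ℝ := P0.eval x with hpdef
  obtain ⟨hpIcc, α, hU⟩ := exists_conj Φ0 hx h00 h11
  have key : nestedU Φ1 Φ0 x = Zrot α * qspU Φ1 p * Zrot (-α) := by
    rw [nestedU]
    rw [show (List.ofFn fun k : Fin m => qspU Φ0 x * Zrot (Φ1 k.succ))
        = (List.ofFn fun k : Fin m => Φ1 k.succ).map
            (fun ψ => qspU Φ0 x * Zrot ψ) by rw [List.map_ofFn]; rfl]
    rw [hU, conj_prod, qspU]
    rw [show (List.ofFn fun k : Fin m => Wosc p * Zrot (Φ1 k.succ))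
        = (List.ofFn fun k : Fin m => Φ1 k.succ).map
            (fun ψ => Wosc p * Zrot ψ) by rw [List.map_ofFn]; rfl]
    rw [← mul_assoc, ← mul_assoc, ← mul_assoc, Zrot_mul, Zrot_mul, add_comm]
  obtain ⟨q00, q11⟩ := hP1 p hpIcc
  obtain ⟨d00, d11⟩ := conj_diag α (qspU Φ1 p)
  rw [key]
  exact ⟨by rw [d00, q00], by rw [d11, q11]⟩
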